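/- Let E be a Banach space and B its closed unit ball. Then E with the weak topology has countable cs*-character if and only if B with the weak topology has countable cs*-character. -/

import Mathlib

open Filter Topology Set

/-- `X` has countable cs*-character at `x`. -/
def CountableCsStarCharacterAt (X : Type*) [TopologicalSpace X] (x : X) : Prop :=
  ∃ D : Set (Set X), D.Countable ∧
    ∀ u : ℕ → X, Tendsto u atTop (nhds x) →
      ∀ U ∈ nhds x, ∃ D₀ ∈ D, D₀ ⊆ U ∧ {n : ℕ | u n ∈ D₀}.Infinite

/-- `X` has countable cs*-character. -/
def CountableCsStarCharacter (X : Type*) [TopologicalSpace X] : Prop :=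
  ∀ x : X, CountableCsStarCharacterAt X x

lemma csStarAt_homeomorph {X Y : Type*} [TopologicalSpace X] [TopologicalSpace Y]
    (e : X ≃ₜ Y) {x : X} (h : CountableCsStarCharacterAt X x) :
    CountableCsStarCharacterAt Y (e x) := by
  obtain ⟨D, hDc, hD⟩ := h
  refine ⟨(fun S => e '' S) '' D, hDc.image _, ?_⟩
  intro u hu U hU
  have hu' : Tendsto (fun n => e.symm (u n)) atTop (nhds x) := by
    have := (e.symm.continuous.tendsto (e x)).comp hu
    simpa [Function.comp_def] using this
  have hU' : e ⁻¹' U ∈ nhds x := e.continuous.tendsto x hU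
  obtain ⟨D₀, hD₀D, hsub, hinf⟩ := hD _ hu' _ hU'
  refine ⟨e '' D₀, ⟨D₀, hD₀D, rfl⟩, ?_, ?_⟩
  · rintro y ⟨z, hz, rfl⟩; exact hsub hz
  · refine hinf.mono ?_
    intro n hn
    exact ⟨e.symm (u n), hn, by simp⟩

lemma csStarAt_subtype {X : Type*} [TopologicalSpace X] {p : X → Prop} {x : X} (hx : p x)
    (h : CountableCsStarCharacterAt X x) :
    CountableCsStarCharacterAt {y // p y} ⟨x, hx⟩ := by
  obtain ⟨D, hDc, hD⟩ := h
  refine ⟨(fun S => Subtype.val ⁻¹' S) '' D, hDc.image _, ?_⟩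
  intro u hu U hU
  have hu' : Tendsto (fun n => (u n : X)) atTop (nhds x) :=
    (continuous_subtype_val.tendsto _).comp hu
  rw [nhds_subtype_eq_comap, mem_comap] at hU
  obtain ⟨V, hV, hVU⟩ := hU
  obtain ⟨D₀, hD₀D, hsub, hinf⟩ := hD _ hu' _ hV
  exact ⟨Subtype.val ⁻¹' D₀, ⟨D₀, hD₀D, rfl⟩, (Set.preimage_mono hsub).trans hVU, hinf⟩

lemma weak_tendsto_bounded {E : Type*} [NormedAddCommGroup E] [NormedSpace ℝ E]
    [CompleteSpace E] {u : ℕ → WeakSpace ℝ E} {x : WeakSpace ℝ E}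
    (hu : Tendsto u atTop (nhds x)) :
    ∃ M : ℝ, ∀ n, ‖(toWeakSpace ℝ E).symm (u n)‖ ≤ M := by
  have heval : ∀ f : StrongDual ℝ E,
      Tendsto (fun n => f ((toWeakSpace ℝ E).symm (u n))) atTop
        (nhds (f ((toWeakSpace ℝ E).symm x))) := by
    intro f
    exact ((WeakBilin.eval_continuous ((topDualPairing ℝ E).flip) f).tendsto x).comp hu
  have hb : ∀ f : StrongDual ℝ E, ∃ C : ℝ, ∀ n : ℕ,
      ‖NormedSpace.inclusionInDoubleDual ℝ E ((toWeakSpace ℝ E).symm (u n)) f‖ ≤ C := by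
    intro f
    have := ((heval f).norm).bddAbove_range
    obtain ⟨C, hC⟩ := this
    exact ⟨C, fun n => hC ⟨n, rfl⟩⟩
  obtain ⟨C', hC'⟩ := banach_steinhaus hb
  refine ⟨C', fun n => ?_⟩
  have := (NormedSpace.inclusionInDoubleDualLi (𝕜 := ℝ) (E := E)).norm_map
    ((toWeakSpace ℝ E).symm (u n))
  rw [← this]
  exact hC' n

instance weakSpace_continuousSMul {E : Type*} [NormedAddCommGroup E] [NormedSpace ℝ E] :
    ContinuousSMul ℝ (WeakSpace ℝ E) :=
  WeakBilin.instContinuousSMul (topDualPairing ℝ E).flip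

lemma csStar_at_zero {E : Type*} [NormedAddCommGroup E] [NormedSpace ℝ E] [CompleteSpace E]
    (hB : CountableCsStarCharacterAt {x : WeakSpace ℝ E // ‖(toWeakSpace ℝ E).symm x‖ ≤ 1}
      ⟨0, by simp⟩) :
    CountableCsStarCharacterAt (WeakSpace ℝ E) 0 := by
  obtain ⟨D, hDc, hD⟩ := hB
  refine ⟨⋃ k : ℕ, (fun S => (fun y : WeakSpace ℝ E => ((k : ℝ) + 1) • y) ''
      (Subtype.val '' S)) '' D, Set.countable_iUnion (fun k => hDc.image _), ?_⟩
  intro u hu U hU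
  obtain ⟨M, hM⟩ := weak_tendsto_bounded hu
  obtain ⟨k, hk⟩ := exists_nat_ge M
  set c : ℝ := (k : ℝ) + 1 with hc
  have hc0 : 0 < c := by positivity
  have hnorm : ∀ n, ‖(toWeakSpace ℝ E).symm (c⁻¹ • u n)‖ ≤ 1 := by
    intro n
    rw [map_smul, norm_smul, Real.norm_eq_abs, abs_of_pos (by positivity)]
    calc c⁻¹ * ‖(toWeakSpace ℝ E).symm (u n)‖ ≤ c⁻¹ * c := by
          refine mul_le_mul_of_nonneg_left ?_ (le_of_lt (by positivity))
          exact (hM n).trans (by linarith)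
      _ = 1 := inv_mul_cancel₀ hc0.ne'
  set v : ℕ → {x : WeakSpace ℝ E // ‖(toWeakSpace ℝ E).symm x‖ ≤ 1} :=
    fun n => ⟨c⁻¹ • u n, hnorm n⟩ with hv_def
  have hv : Tendsto v atTop (nhds ⟨0, by simp⟩) := by
    rw [tendsto_subtype_rng]
    have : Tendsto (fun n => c⁻¹ • u n) atTop (nhds (c⁻¹ • (0 : WeakSpace ℝ E))) :=
      hu.const_smul _
    simpa using this
  have hVmem : (fun y : WeakSpace ℝ E => c • y) ⁻¹' U ∈ nhds (0 : WeakSpace ℝ E) := by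
    have hcont : Continuous (fun y : WeakSpace ℝ E => c • y) := continuous_const_smul c
    have := hcont.tendsto (0 : WeakSpace ℝ E)
    rw [smul_zero] at this
    exact this hU
  have hVmem' : Subtype.val ⁻¹' ((fun y : WeakSpace ℝ E => c • y) ⁻¹' U) ∈
      nhds (⟨0, by simp⟩ : {x : WeakSpace ℝ E // ‖(toWeakSpace ℝ E).symm x‖ ≤ 1}) :=
    (continuous_subtype_val.tendsto _) hVmem
  obtain ⟨D₀, hD₀D, hsub, hinf⟩ := hD v hv _ hVmem'
  refine ⟨(fun y : WeakSpace ℝ E => c • y) '' (Subtype.val '' D₀), ?_, ?_, ?_⟩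
  · exact Set.mem_iUnion.2 ⟨k, ⟨D₀, hD₀D, rfl⟩⟩
  · rintro _ ⟨_, ⟨y, hy, rfl⟩, rfl⟩
    exact hsub hy
  · refine hinf.mono ?_
    intro n hn
    refine ⟨c⁻¹ • u n, ⟨v n, hn, rfl⟩, ?_⟩
    exact smul_inv_smul₀ hc0.ne' (u n)

/-- Corollary 4.3(ii): a Banach space with the weak topology has countable cs*-character iff
its closed unit ball with the weak topology has countable cs*-character. -/
theorem weak_csStar_iff_ball_csStar
    {E : Type*} [NormedAddCommGroup E] [NormedSpace ℝ E] [CompleteSpace E] :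
    CountableCsStarCharacter (WeakSpace ℝ E) ↔
      CountableCsStarCharacter
        {x : WeakSpace ℝ E // ‖(toWeakSpace ℝ E).symm x‖ ≤ 1} := by
  constructor
  · intro h x
    have := csStarAt_subtype (p := fun y : WeakSpace ℝ E => ‖(toWeakSpace ℝ E).symm y‖ ≤ 1)
      x.2 (h x.1)
    simpa using this
  · intro h x
    have h0 : CountableCsStarCharacterAt (WeakSpace ℝ E) 0 :=
      csStar_at_zero (h ⟨0, by simp⟩)
    have := csStarAt_homeomorph (Homeomorph.addLeft x) h0
    simpa using this
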